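/- Let G, c > 0 and set μ_g := 4πG/c² and ε_g := 1/(4πG) (so ε_g μ_g c² = 1). Let A : ℝ × ℝ³ → ℝ³ and φ : ℝ × ℝ³ → ℝ be smooth fields satisfying the Lorenz gauge condition div A + c⁻² ∂_t φ = 0. Set F := −∇φ − ∂_t A (the gravitational field) and B := curl A, and suppose the Maxwell–Heaviside equations hold for a smooth momentum density p : ℝ × ℝ³ → ℝ³ and mass density ρ : ℝ × ℝ³ → ℝ: μ_g⁻¹ curl B − ε_g ∂_t F = −p and ε_g div F = −ρ. Then for j = 1,2,3, Δ A_j − c⁻² ∂_t² A_j = μ_g p_j, and Δφ − c⁻² ∂_t² φ = 4πG ρ, everywhere. (The wave equations of the paper's Theorem on the Maxwell–Heaviside equations for gravity, in vector-calculus form; in the static limit the second equation reduces to the Newtonian Poisson equation Δφ = 4πGρ.) -/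

import Mathlib

open scoped BigOperators

noncomputable section

/-- Points of space-time: time paired with a spatial point. -/
abbrev SpaceTime : Type := ℝ × (Fin 3 → ℝ)

/-- Spatial partial derivative in coordinate direction `j`. -/
def pd (j : Fin 3) (f : (Fin 3 → ℝ) → ℝ) (x : Fin 3 → ℝ) : ℝ :=
  fderiv ℝ f x (Pi.single j 1)

/-- Spatial divergence of a time-dependent vector field. -/
def div3 (F : SpaceTime → (Fin 3 → ℝ)) (t : ℝ) (x : Fin 3 → ℝ) : ℝ :=
  ∑ j : Fin 3, pd j (fun y => F (t, y) j) x

/-- `j`-th component of the spatial curl of a time-dependent vector field. -/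
def curl3 (F : SpaceTime → (Fin 3 → ℝ)) (t : ℝ) (x : Fin 3 → ℝ) (j : Fin 3) : ℝ :=
  pd (j + 1) (fun y => F (t, y) (j + 2)) x - pd (j + 2) (fun y => F (t, y) (j + 1)) x

/-- `j`-th component of the spatial gradient of a time-dependent scalar field. -/
def grad3 (f : SpaceTime → ℝ) (t : ℝ) (x : Fin 3 → ℝ) (j : Fin 3) : ℝ :=
  pd j (fun y => f (t, y)) x

/-- Time derivative of a time-dependent scalar field. -/
def dt1 (f : SpaceTime → ℝ) (t : ℝ) (x : Fin 3 → ℝ) : ℝ :=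
  deriv (fun s => f (s, x)) t

/-- Second time derivative of a time-dependent scalar field. -/
def dt2 (f : SpaceTime → ℝ) (t : ℝ) (x : Fin 3 → ℝ) : ℝ :=
  deriv (fun s => dt1 f s x) t

/-- Spatial Laplacian of a time-dependent scalar field. -/
def lap3 (f : SpaceTime → ℝ) (t : ℝ) (x : Fin 3 → ℝ) : ℝ :=
  ∑ j : Fin 3, pd j (fun y => pd j (fun z => f (t, z)) y) x

namespace MH

/-- directional derivative on spacetime -/
def Dv (v : SpaceTime) (f : SpaceTime → ℝ) : SpaceTime → ℝ := fun q => fderiv ℝ f q v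

abbrev et : SpaceTime := ((1:ℝ), (0 : Fin 3 → ℝ))
abbrev es (j : Fin 3) : SpaceTime := ((0:ℝ), Pi.single j (1:ℝ))

lemma Dv_contDiff {f : SpaceTime → ℝ} (hf : ContDiff ℝ (⊤:ℕ∞) f) (v : SpaceTime) :
    ContDiff ℝ (⊤:ℕ∞) (Dv v f) := by
  have h : ContDiff ℝ (⊤:ℕ∞) (fderiv ℝ f) := hf.fderiv_right (by exact_mod_cast le_top)
  exact (ContinuousLinearMap.apply ℝ ℝ v).contDiff.comp h

lemma Dv_diff {f : SpaceTime → ℝ} (hf : ContDiff ℝ (⊤:ℕ∞) f) (v : SpaceTime) :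
    Differentiable ℝ (Dv v f) := (Dv_contDiff hf v).differentiable (by simp)

lemma Dv_comm {f : SpaceTime → ℝ} (hf : ContDiff ℝ (⊤:ℕ∞) f) (v w : SpaceTime) (q : SpaceTime) :
    Dv v (Dv w f) q = Dv w (Dv v f) q := by
  have hd : Differentiable ℝ f := hf.differentiable (by simp)
  have hC : ContDiff ℝ (⊤:ℕ∞) (fderiv ℝ f) := hf.fderiv_right (by exact_mod_cast le_top)
  have hd' : Differentiable ℝ (fderiv ℝ f) := hC.differentiable (by simp)
  have h1 : ∀ y, HasFDerivAt f (fderiv ℝ f y) y := fun y => (hd y).hasFDerivAt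
  have h2 : HasFDerivAt (fderiv ℝ f) (fderiv ℝ (fderiv ℝ f) q) q := (hd' q).hasFDerivAt
  have symm := second_derivative_symmetric h1 h2 v w
  have key : ∀ u z : SpaceTime, Dv u (Dv z f) q = fderiv ℝ (fderiv ℝ f) q u z := by
    intro u z
    have h3 : HasFDerivAt (fun r : SpaceTime => fderiv ℝ f r z)
        ((ContinuousLinearMap.apply ℝ ℝ z).comp (fderiv ℝ (fderiv ℝ f) q)) q :=
      ((ContinuousLinearMap.apply ℝ ℝ z).hasFDerivAt).comp q h2
    have he : Dv u (Dv z f) q = fderiv ℝ (fun r => fderiv ℝ f r z) q u := rfl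
    rw [he, h3.fderiv]; simp
  rw [key v w, key w v, symm]

lemma pd_eq {f : SpaceTime → ℝ} (hf : ContDiff ℝ (⊤:ℕ∞) f) (j : Fin 3) (t : ℝ) (x : Fin 3 → ℝ) :
    pd j (fun y => f (t, y)) x = Dv (es j) f (t, x) := by
  have h : HasFDerivAt (fun y : Fin 3 → ℝ => f (t, y))
      ((fderiv ℝ f (t, x)).comp
        (((0 : (Fin 3 → ℝ) →L[ℝ] ℝ)).prod (ContinuousLinearMap.id ℝ (Fin 3 → ℝ)))) x :=
    ((hf.differentiable (by simp) (t, x)).hasFDerivAt).comp x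
      (HasFDerivAt.prodMk (hasFDerivAt_const t x) (hasFDerivAt_id x))
  simp [pd, h.fderiv, Dv]

lemma pd_eq' {f : SpaceTime → ℝ} (hf : ContDiff ℝ (⊤:ℕ∞) f) (j : Fin 3) (t : ℝ)
    (x : Fin 3 → ℝ) {g : (Fin 3 → ℝ) → ℝ} (hg : ∀ y, g y = f (t, y)) :
    pd j g x = Dv (es j) f (t, x) := by
  rw [show g = fun y => f (t, y) from funext hg]; exact pd_eq hf j t x

lemma dt1_eq {f : SpaceTime → ℝ} (hf : ContDiff ℝ (⊤:ℕ∞) f) (t : ℝ) (x : Fin 3 → ℝ) :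
    dt1 f t x = Dv et f (t, x) := by
  have h : HasFDerivAt (fun s : ℝ => f (s, x))
      ((fderiv ℝ f (t, x)).comp
        ((ContinuousLinearMap.id ℝ ℝ).prod (0 : ℝ →L[ℝ] (Fin 3 → ℝ)))) t :=
    ((hf.differentiable (by simp) (t, x)).hasFDerivAt).comp t
      (HasFDerivAt.prodMk (hasFDerivAt_id t) (hasFDerivAt_const x t))
  rw [dt1, ← fderiv_apply_one_eq_deriv, h.fderiv]
  simp [Dv]

lemma dt1_eq' {f : SpaceTime → ℝ} (hf : ContDiff ℝ (⊤:ℕ∞) f) (t : ℝ) (x : Fin 3 → ℝ)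
    {g : ℝ → ℝ} (hg : ∀ s, g s = f (s, x)) :
    deriv g t = Dv et f (t, x) := by
  rw [show g = fun s => f (s, x) from funext hg]; exact dt1_eq hf t x

lemma Dv_sub {f g : SpaceTime → ℝ} (hf : Differentiable ℝ f) (hg : Differentiable ℝ g)
    (v q : SpaceTime) : Dv v (fun r => f r - g r) q = Dv v f q - Dv v g q := by
  simp [Dv, fderiv_fun_sub (hf q) (hg q)]

lemma Dv_neg_sub {f g : SpaceTime → ℝ} (hf : Differentiable ℝ f) (hg : Differentiable ℝ g)
    (v q : SpaceTime) : Dv v (fun r => -f r - g r) q = -(Dv v f q) - Dv v g q := by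
  simp [Dv, fderiv_fun_sub (show DifferentiableAt ℝ (fun r => -f r) q from (hf q).neg) (hg q), fderiv_fun_neg]

lemma Dv_sum {f : Fin 3 → SpaceTime → ℝ} (hf : ∀ i, Differentiable ℝ (f i))
    (v q : SpaceTime) :
    Dv v (fun r => ∑ i : Fin 3, f i r) q = ∑ i : Fin 3, Dv v (f i) q := by
  simp [Dv, fderiv_fun_sum (fun i _ => (hf i) q)]

lemma Dv_const_mul {f : SpaceTime → ℝ} (hf : Differentiable ℝ f) (a : ℝ)
    (v q : SpaceTime) : Dv v (fun r => a * f r) q = a * Dv v f q := by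
  simp [Dv, fderiv_const_mul (hf q) a]

lemma sum_fin3 (f : Fin 3 → ℝ) (j : Fin 3) : ∑ k, f k = f j + f (j+1) + f (j+2) := by
  fin_cases j <;> simp [Fin.sum_univ_three] <;> ring

lemma f1 : ∀ j : Fin 3, j + 2 + 1 = j := by decide
lemma f2 : ∀ j : Fin 3, j + 2 + 2 = j + 1 := by decide
lemma f3 : ∀ j : Fin 3, j + 1 + 1 = j + 2 := by decide
lemma f4 : ∀ j : Fin 3, j + 1 + 2 = j := by decide

lemma alg1 (π g cc a b d e f X T P : ℝ) (hπ : π ≠ 0) (hg : g ≠ 0) (hc : cc ≠ 0)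
    (h1 : a + b + d = -(cc⁻¹^2) * X)
    (h2 : (4*π*g/cc^2)⁻¹ * ((b - e) - (f - d)) - (1/(4*π*g)) * (-X - T) = -P) :
    a + e + f - cc⁻¹^2 * T = (4*π*g/cc^2) * P := by
  field_simp at h1 h2 ⊢
  linear_combination h1 - h2

lemma alg2 (π g cc L T R : ℝ) (hπ : π ≠ 0) (hg : g ≠ 0) (hc : cc ≠ 0)
    (h : (1/(4*π*g)) * (-L + cc⁻¹^2 * T) = -R) :
    L - cc⁻¹^2 * T = 4*π*g*R := by
  field_simp at h ⊢
  linear_combination -h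

end MH

open MH in
/-- the Maxwell–Heaviside equations for gravity in the Lorenz
gauge imply the wave equations `□Aⱼ = -μ_g pⱼ` and
`Δφ - c⁻²∂ₜ²φ = 4πGρ` (the relativistic Poisson equation). -/
theorem maxwell_heaviside_wave_equations
    (G c : ℝ) (hG : 0 < G) (hc : 0 < c)
    (μg εg : ℝ) (hμg : μg = 4 * Real.pi * G / c ^ 2)
    (hεg : εg = 1 / (4 * Real.pi * G))
    (A : SpaceTime → (Fin 3 → ℝ)) (φ : SpaceTime → ℝ)
    (hA : ContDiff ℝ (⊤ : ℕ∞) A) (hφ : ContDiff ℝ (⊤ : ℕ∞) φ)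
    (hgauge : ∀ (t : ℝ) (x : Fin 3 → ℝ),
      div3 A t x + c⁻¹ ^ 2 * dt1 φ t x = 0)
    (F B : SpaceTime → (Fin 3 → ℝ))
    (hF : ∀ (t : ℝ) (x : Fin 3 → ℝ) (j : Fin 3),
      F (t, x) j = -grad3 φ t x j - dt1 (fun p => A p j) t x)
    (hB : ∀ (t : ℝ) (x : Fin 3 → ℝ) (j : Fin 3), B (t, x) j = curl3 A t x j)
    (p : SpaceTime → (Fin 3 → ℝ)) (ρ : SpaceTime → ℝ)
    (hp : ContDiff ℝ (⊤ : ℕ∞) p) (hρ : ContDiff ℝ (⊤ : ℕ∞) ρ)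
    (hMH : ∀ (t : ℝ) (x : Fin 3 → ℝ) (j : Fin 3),
      μg⁻¹ * curl3 B t x j - εg * dt1 (fun q => F q j) t x = -p (t, x) j)
    (hGauss : ∀ (t : ℝ) (x : Fin 3 → ℝ), εg * div3 F t x = -ρ (t, x)) :
    (∀ (t : ℝ) (x : Fin 3 → ℝ) (j : Fin 3),
      lap3 (fun q => A q j) t x - c⁻¹ ^ 2 * dt2 (fun q => A q j) t x
        = μg * p (t, x) j) ∧
    (∀ (t : ℝ) (x : Fin 3 → ℝ),
      lap3 φ t x - c⁻¹ ^ 2 * dt2 φ t x = 4 * Real.pi * G * ρ (t, x)) := by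
  have hπ : Real.pi ≠ 0 := Real.pi_ne_zero
  have hG' : G ≠ 0 := ne_of_gt hG
  have hc' : c ≠ 0 := ne_of_gt hc
  have hAk : ∀ k : Fin 3, ContDiff ℝ (⊤:ℕ∞) (fun r : SpaceTime => A r k) :=
    fun k => contDiff_pi.mp hA k
  -- Laplacian and second time derivative in Dv form
  have hlap : ∀ (f : SpaceTime → ℝ), ContDiff ℝ (⊤:ℕ∞) f → ∀ (t : ℝ) (x : Fin 3 → ℝ),
      lap3 f t x = ∑ k : Fin 3, Dv (es k) (Dv (es k) f) (t, x) := by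
    intro f hf t x
    unfold lap3
    exact Finset.sum_congr rfl fun k _ =>
      pd_eq' (Dv_contDiff hf (es k)) k t x (fun y => pd_eq hf k t y)
  have hdt2 : ∀ (f : SpaceTime → ℝ), ContDiff ℝ (⊤:ℕ∞) f → ∀ (t : ℝ) (x : Fin 3 → ℝ),
      dt2 f t x = Dv et (Dv et f) (t, x) := by
    intro f hf t x
    unfold dt2
    exact dt1_eq' (Dv_contDiff hf et) t x (fun s => dt1_eq hf s x)
  -- the gauge condition in Dv form
  have hgauge' : ∀ (t : ℝ) (x : Fin 3 → ℝ),
      (∑ k : Fin 3, Dv (es k) (fun r => A r k) (t, x)) = -(c⁻¹^2) * Dv et φ (t, x) := by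
    intro t x
    have h := hgauge t x
    unfold div3 at h
    rw [dt1_eq hφ t x] at h
    have hs : ∀ k ∈ Finset.univ, pd k (fun y => A (t, y) k) x
        = Dv (es k) (fun r => A r k) (t, x) :=
      fun k _ => pd_eq' (hAk k) k t x (fun y => rfl)
    rw [Finset.sum_congr rfl hs] at h
    linarith
  -- spatial/time derivatives of the gauge condition
  have hgaugeD : ∀ (v : SpaceTime) (t : ℝ) (x : Fin 3 → ℝ),
      (∑ k : Fin 3, Dv v (Dv (es k) (fun r => A r k)) (t, x))
        = -(c⁻¹^2) * Dv v (Dv et φ) (t, x) := by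
    intro v t x
    have hfun : (fun q : SpaceTime => ∑ k : Fin 3, Dv (es k) (fun r => A r k) q)
        = fun q : SpaceTime => -(c⁻¹^2) * Dv et φ q := funext fun q => hgauge' q.1 q.2
    calc (∑ k : Fin 3, Dv v (Dv (es k) (fun r => A r k)) (t, x))
        = Dv v (fun q => ∑ k : Fin 3, Dv (es k) (fun r => A r k) q) (t, x) :=
          (Dv_sum (fun k => Dv_diff (hAk k) (es k)) v (t, x)).symm
      _ = Dv v (fun q => -(c⁻¹^2) * Dv et φ q) (t, x) := by rw [hfun]
      _ = -(c⁻¹^2) * Dv v (Dv et φ) (t, x) := Dv_const_mul (Dv_diff hφ et) _ v (t, x)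
  -- the field F in Dv form
  have hFk : ∀ j : Fin 3, ContDiff ℝ (⊤:ℕ∞)
      (fun q : SpaceTime => -(Dv (es j) φ q) - Dv et (fun r => A r j) q) :=
    fun j => (Dv_contDiff hφ (es j)).neg.sub (Dv_contDiff (hAk j) et)
  have hF' : ∀ (t : ℝ) (x : Fin 3 → ℝ) (j : Fin 3),
      F (t, x) j = (fun q : SpaceTime =>
        -(Dv (es j) φ q) - Dv et (fun r => A r j) q) (t, x) := by
    intro t x j
    rw [hF t x j]
    unfold grad3
    rw [pd_eq hφ j t x, dt1_eq (hAk j) t x]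
  -- the field B in Dv form
  have hgB : ∀ k : Fin 3, ContDiff ℝ (⊤:ℕ∞)
      (fun q : SpaceTime => Dv (es (k+1)) (fun r => A r (k+2)) q
        - Dv (es (k+2)) (fun r => A r (k+1)) q) :=
    fun k => (Dv_contDiff (hAk (k+2)) (es (k+1))).sub (Dv_contDiff (hAk (k+1)) (es (k+2)))
  have hB' : ∀ (t : ℝ) (x : Fin 3 → ℝ) (k : Fin 3),
      B (t, x) k = (fun q : SpaceTime => Dv (es (k+1)) (fun r => A r (k+2)) q
        - Dv (es (k+2)) (fun r => A r (k+1)) q) (t, x) := by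
    intro t x k
    rw [hB t x k]
    unfold curl3
    rw [pd_eq (hAk (k+2)) (k+1) t x, pd_eq (hAk (k+1)) (k+2) t x]
  constructor
  · -- wave equation for A j
    intro t x j
    -- curl of B in second-derivative form
    have hcurlB : curl3 B t x j =
        (Dv (es j) (Dv (es (j+1)) (fun r => A r (j+1))) (t, x)
          - Dv (es (j+1)) (Dv (es (j+1)) (fun r => A r j)) (t, x))
        - (Dv (es (j+2)) (Dv (es (j+2)) (fun r => A r j)) (t, x)
          - Dv (es j) (Dv (es (j+2)) (fun r => A r (j+2))) (t, x)) := by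
      unfold curl3
      rw [pd_eq' (hgB (j+2)) (j+1) t x (fun y => hB' t y (j+2)),
          pd_eq' (hgB (j+1)) (j+2) t x (fun y => hB' t y (j+1))]
      rw [f1 j, f2 j, f3 j, f4 j]
      rw [Dv_sub (Dv_diff (hAk (j+1)) (es j)) (Dv_diff (hAk j) (es (j+1))) (es (j+1)) (t, x),
          Dv_sub (Dv_diff (hAk j) (es (j+2))) (Dv_diff (hAk (j+2)) (es j)) (es (j+2)) (t, x)]
      rw [Dv_comm (hAk (j+1)) (es (j+1)) (es j) (t, x),
          Dv_comm (hAk (j+2)) (es (j+2)) (es j) (t, x)]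
    -- time derivative of F j
    have hdtF : dt1 (fun q => F q j) t x
        = -(Dv et (Dv (es j) φ) (t, x)) - Dv et (Dv et (fun r => A r j)) (t, x) := by
      unfold dt1
      rw [dt1_eq' (hFk j) t x (fun s => hF' s x j)]
      exact Dv_neg_sub (Dv_diff hφ (es j)) (Dv_diff (hAk j) et) et (t, x)
    have hE := hMH t x j
    rw [hcurlB, hdtF] at hE
    have hg1 := hgaugeD (es j) t x
    rw [sum_fin3 (fun k => Dv (es j) (Dv (es k) (fun r => A r k)) (t, x)) j] at hg1
    rw [Dv_comm hφ (es j) et (t, x)] at hg1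
    rw [hlap (fun r => A r j) (hAk j) t x, hdt2 (fun r => A r j) (hAk j) t x]
    rw [sum_fin3 (fun k => Dv (es k) (Dv (es k) (fun r => A r j)) (t, x)) j]
    rw [hμg]
    rw [hμg, hεg] at hE
    exact alg1 Real.pi G c _ _ _ _ _ _ _ _ hπ hG' hc' hg1 hE
  · -- wave equation for φ
    intro t x
    have hdivF : div3 F t x = ∑ k : Fin 3,
        (-(Dv (es k) (Dv (es k) φ) (t, x))
          - Dv et (Dv (es k) (fun r => A r k)) (t, x)) := by
      unfold div3
      refine Finset.sum_congr rfl fun k _ => ?_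
      rw [pd_eq' (hFk k) k t x (fun y => hF' t y k),
          Dv_neg_sub (Dv_diff hφ (es k)) (Dv_diff (hAk k) et) (es k) (t, x),
          Dv_comm (hAk k) (es k) et (t, x)]
    have hdivF' : div3 F t x = -(∑ k : Fin 3, Dv (es k) (Dv (es k) φ) (t, x))
        + c⁻¹^2 * Dv et (Dv et φ) (t, x) := by
      rw [hdivF, Finset.sum_sub_distrib, hgaugeD et t x]
      rw [Finset.sum_neg_distrib]
      ring
    have hgE := hGauss t x
    rw [hdivF', hεg] at hgE
    rw [hlap φ hφ t x, hdt2 φ hφ t x]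
    exact alg2 Real.pi G c _ _ _ hπ hG' hc' hgE
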